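/- Let θ ∈ (0,1), ψ = θ/(2(1−θ)²), and let κ, σ_μ, σ_R > 0 be such that Δ_ψ := 4κ²(1 − 2ψ(σ_μ/(κσ_R))²) < 0. Set δ_ψ := (1/2)√(−Δ_ψ) and T^E := (1/δ_ψ)(π/2 + arctan(κ/δ_ψ)). Then for T > 0 there exists a differentiable function A : [0,T] → ℝ with A(T) = 0 and A′(t) = −2σ_μ² A(t)² + 2κ A(t) − ψ/σ_R² for all t ∈ [0,T] if and only if T < T^E. -/

import Mathlib

/-- If `Δ_ψ < 0`, the Riccati terminal value problem
`A'(t) = −2σ_μ²A(t)² + 2κA(t) − ψ/σ_R²`, `A(T) = 0` has a solution on `[0,T]`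
if and only if `T` is smaller than the explosion time
`T^E = (1/δ_ψ)(π/2 + arctan(κ/δ_ψ))` where `δ_ψ = (1/2)√(−Δ_ψ)`. -/
theorem stmt_12 (θ ψ κ σμ σR T : ℝ) (hθ : θ ∈ Set.Ioo (0 : ℝ) 1)
    (hψ : ψ = θ / (2 * (1 - θ) ^ 2))
    (hκ : 0 < κ) (hσμ : 0 < σμ) (hσR : 0 < σR) (hT : 0 < T)
    (hΔ : 4 * κ ^ 2 * (1 - 2 * ψ * (σμ / (κ * σR)) ^ 2) < 0)
    (δ : ℝ) (hδ : δ = (1 / 2) * Real.sqrt (-(4 * κ ^ 2 * (1 - 2 * ψ * (σμ / (κ * σR)) ^ 2))))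
    (TE : ℝ) (hTE : TE = (1 / δ) * (Real.pi / 2 + Real.arctan (κ / δ))) :
    (∃ A : ℝ → ℝ,
        A T = 0 ∧
        ∀ t ∈ Set.Icc 0 T,
          HasDerivWithinAt A (-2 * σμ ^ 2 * A t ^ 2 + 2 * κ * A t - ψ / σR ^ 2)
            (Set.Icc 0 T) t) ↔
      T < TE := by
  have hκ' : κ ≠ 0 := hκ.ne'
  have hσR' : σR ≠ 0 := hσR.ne'
  have hσμ' : σμ ≠ 0 := hσμ.ne'
  have hX : 0 < -(4 * κ ^ 2 * (1 - 2 * ψ * (σμ / (κ * σR)) ^ 2)) := by linarith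
  have hδpos : 0 < δ := by
    rw [hδ]; positivity
  have hδ' : δ ≠ 0 := hδpos.ne'
  have hδ2 : δ ^ 2 * σR ^ 2 = 2 * σμ ^ 2 * ψ - κ ^ 2 * σR ^ 2 := by
    have h1 : δ ^ 2 = (1/4) * -(4 * κ ^ 2 * (1 - 2 * ψ * (σμ / (κ * σR)) ^ 2)) := by
      rw [hδ, mul_pow, Real.sq_sqrt hX.le]; ring
    rw [h1]; field_simp; ring
  constructor
  · -- existence → T < TE
    rintro ⟨A, hAT, hA⟩
    set u : ℝ → ℝ := fun t => (2 * σμ ^ 2 * A t - κ) / δ with hu_def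
    set g : ℝ → ℝ := fun t => Real.arctan (u t) + δ * t with hg_def
    have hg : ∀ t ∈ Set.Icc 0 T, HasDerivWithinAt g 0 (Set.Icc 0 T) t := by
      intro t ht
      have hu : HasDerivWithinAt u
          ((2 * σμ ^ 2 * (-2 * σμ ^ 2 * A t ^ 2 + 2 * κ * A t - ψ / σR ^ 2)) / δ)
          (Set.Icc 0 T) t := by
        simpa using (((hA t ht).const_mul (2 * σμ ^ 2)).sub_const κ).div_const δ
      have harc := (Real.hasDerivAt_arctan (u t)).comp_hasDerivWithinAt t hu
      have hlin : HasDerivWithinAt (fun s => δ * s) δ (Set.Icc 0 T) t := by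
        simpa using ((hasDerivAt_id t).const_mul δ).hasDerivWithinAt
      have h := harc.add hlin
      have hval : 1 / (1 + u t ^ 2) *
          (2 * σμ ^ 2 * (-2 * σμ ^ 2 * A t ^ 2 + 2 * κ * A t - ψ / σR ^ 2) / δ) + δ = 0 := by
        have hue : u t = (2 * σμ ^ 2 * A t - κ) / δ := rfl
        rw [hue]
        have h1 : (1 : ℝ) + ((2 * σμ ^ 2 * A t - κ) / δ) ^ 2 ≠ 0 := by positivity
        field_simp
        linear_combination δ * hδ2
      rw [hval] at h
      exact h
    have hconst := constant_of_has_deriv_right_zero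
      (fun t ht => (hg t ht).continuousWithinAt)
      (fun x hx => (hg x (Set.Ico_subset_Icc_self hx)).mono_of_mem_nhdsWithin
        (Icc_mem_nhdsGE_of_mem hx))
    have hgT : g T = g 0 := hconst T (Set.right_mem_Icc.mpr hT.le)
    have hgTval : g T = -Real.arctan (κ / δ) + δ * T := by
      simp only [hg_def, hu_def, hAT]
      rw [show (2 * σμ ^ 2 * 0 - κ) / δ = -(κ / δ) by ring, Real.arctan_neg]
    have hg0 : g 0 = Real.arctan (u 0) := by simp [hg_def]
    have hlt : Real.arctan (u 0) < Real.pi / 2 := Real.arctan_lt_pi_div_two _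
    have key : δ * T < Real.pi / 2 + Real.arctan (κ / δ) := by
      rw [hgTval, hg0] at hgT; linarith
    rw [hTE]
    calc T = (1 / δ) * (δ * T) := by field_simp
      _ < (1 / δ) * (Real.pi / 2 + Real.arctan (κ / δ)) := by
          apply mul_lt_mul_of_pos_left key; positivity
  · -- T < TE → existence
    intro hTlt
    have key : δ * T < Real.pi / 2 + Real.arctan (κ / δ) := by
      have h1 : δ * T < δ * TE := mul_lt_mul_of_pos_left hTlt hδpos
      rw [hTE, show δ * ((1/δ) * (Real.pi / 2 + Real.arctan (κ / δ)))
        = Real.pi / 2 + Real.arctan (κ / δ) by field_simp] at h1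
      exact h1
    refine ⟨fun t => (κ + δ * Real.tan (δ * (T - t) - Real.arctan (κ / δ))) / (2 * σμ ^ 2),
      ?_, ?_⟩
    · simp only [sub_self, mul_zero, zero_sub, Real.tan_neg, Real.tan_arctan]
      field_simp
      ring
    · intro t ht
      set x := δ * (T - t) - Real.arctan (κ / δ) with hx_def
      have hx1 : -(Real.pi / 2) < x := by
        have h1 : 0 ≤ δ * (T - t) := mul_nonneg hδpos.le (by linarith [ht.2])
        have := Real.arctan_lt_pi_div_two (κ / δ)
        simp only [hx_def]; linarith
      have hx2 : x < Real.pi / 2 := by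
        have h1 : δ * (T - t) ≤ δ * T := by
          apply mul_le_mul_of_nonneg_left _ hδpos.le; linarith [ht.1]
        simp only [hx_def]; linarith
      have hcos : Real.cos x ≠ 0 := (Real.cos_pos_of_mem_Ioo ⟨hx1, hx2⟩).ne'
      have hinner : HasDerivAt (fun s : ℝ => δ * (T - s) - Real.arctan (κ / δ)) (-δ) t := by
        have h1 : HasDerivAt (fun s : ℝ => δ * (T - s)) (δ * (-1)) t :=
          ((hasDerivAt_id t).const_sub T).const_mul δ
        simpa using h1.sub_const (Real.arctan (κ / δ))
      have htan : HasDerivAt (fun s : ℝ => Real.tan (δ * (T - s) - Real.arctan (κ / δ)))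
          (1 / Real.cos x ^ 2 * (-δ)) t :=
        by have := (Real.hasDerivAt_tan hcos).comp t hinner; exact this
      have hAd : HasDerivAt (fun s : ℝ =>
          (κ + δ * Real.tan (δ * (T - s) - Real.arctan (κ / δ))) / (2 * σμ ^ 2))
          (δ * (1 / Real.cos x ^ 2 * (-δ)) / (2 * σμ ^ 2)) t :=
        ((htan.const_mul δ).const_add κ).div_const (2 * σμ ^ 2)
      have hcsq : 1 / Real.cos x ^ 2 = 1 + Real.tan x ^ 2 := by
        rw [one_div, ← Real.inv_one_add_tan_sq hcos, inv_inv]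
      refine hAd.hasDerivWithinAt.congr_deriv ?_
      beta_reduce
      rw [hcsq]
      have hs : Real.tan (δ * (T - t) - Real.arctan (κ / δ)) = Real.tan x := rfl
      rw [hs]
      field_simp
      linear_combination (-1) * hδ2
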